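/- Let V_n = ([−n,n] ∩ ℤ)² and ∂V_n = {i ∈ ℤ² ∖ V_n : dist(i, V_n) = 1} its boundary. Let α ∈ (0,1], let π be a closed polygon without self-intersections with area(int π) = 4α, with edges π_1, …, π_R of slopes λ_r ∈ [0,1] (as graphs over the x- or y-axis), and set k(n) = [√(α |V_n| / area(int π))]. Let L_{k(n)} π be the lattice approximation of the blowup B_{k(n)} π. Then lim_{n→∞} |L_{k(n)} π| / |∂V_n| = Σ_{r=1}^{R} (1/√(1 + λ_r²)) · (length π_r / 8). -/

import Mathlib

/-!
STATEMENT 19: let `V_n = ([−n,n] ∩ ℤ)²` with boundary `∂V_n`, let `α ∈ (0,1]`, let `π` be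
a closed polygon without self-intersections with `area(int π) = 4α`, edges of slopes
`λ_r ∈ [0,1]`, and `k(n) = [√(α|V_n|/area(int π))]`.  Then
`|L_{k(n)} π| / |∂V_n| → Σ_r (1/√(1+λ_r²)) · (length π_r / 8)`.
The polygon is given by its vertices `A 0, …, A R` with `A R = A 0`; the enclosed area is
computed by the shoelace formula, and absence of self-intersections is expressed as
injectivity of the piecewise-linear parametrization on `[0, R)`.
-/

/-- Euclidean distance between two points of the plane. -/
noncomputable def elen (u w : ℝ × ℝ) : ℝ :=
  Real.sqrt ((w.1 - u.1) ^ 2 + (w.2 - u.2) ^ 2)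

/-- Slope in `[0,1]` associated with a direction vector (graph over the x- or y-axis). -/
noncomputable def slopeOf (v : ℝ × ℝ) : ℝ := min |v.2 / v.1| |v.1 / v.2|

/-- Lattice approximation of the segment from `u` to `w` (graph over the x-axis if the
segment is closer to horizontal, otherwise graph over the y-axis). -/
noncomputable def segLatticeApprox (u w : ℝ × ℝ) : Set (ℤ × ℤ) :=
  if |w.2 - u.2| ≤ |w.1 - u.1| then
    {p : ℤ × ℤ | min u.1 w.1 ≤ (p.1 : ℝ) ∧ (p.1 : ℝ) ≤ max u.1 w.1 ∧
      p.2 = ⌊(w.2 - u.2) / (w.1 - u.1) * (p.1 : ℝ) + (u.2 - (w.2 - u.2) / (w.1 - u.1) * u.1)⌋}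
  else
    {p : ℤ × ℤ | min u.2 w.2 ≤ (p.2 : ℝ) ∧ (p.2 : ℝ) ≤ max u.2 w.2 ∧
      p.1 = ⌊(w.1 - u.1) / (w.2 - u.2) * (p.2 : ℝ) + (u.1 - (w.1 - u.1) / (w.2 - u.2) * u.2)⌋}

/-- The box `V_n = ([−n,n] ∩ ℤ)²`. -/
def Vbox (n : ℕ) : Set (ℤ × ℤ) := {p | |p.1| ≤ (n : ℤ) ∧ |p.2| ≤ (n : ℤ)}

/-- The boundary `∂V` of `V ⊆ ℤ²`: the sites outside `V` at (Euclidean) distance 1 from `V`. -/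
def latticeBoundary (V : Set (ℤ × ℤ)) : Set (ℤ × ℤ) :=
  {p | p ∉ V ∧ ∃ q ∈ V, (p.1 - q.1) ^ 2 + (p.2 - q.2) ^ 2 = 1}

/-- Area enclosed by the closed polygon with vertices `A 0, …, A R` (shoelace formula). -/
noncomputable def polyArea {R : ℕ} (A : Fin (R + 1) → ℝ × ℝ) : ℝ :=
  |∑ r : Fin R, ((A r.castSucc).1 * (A r.succ).2 - (A r.succ).1 * (A r.castSucc).2)| / 2

/-- Piecewise-linear parametrization of the polygon with vertices `A 0, …, A R` on `[0, R]`. -/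
noncomputable def polyMap {R : ℕ} (A : Fin (R + 1) → ℝ × ℝ) (t : ℝ) : ℝ × ℝ :=
  ∑ r : Fin R,
    if (r : ℝ) ≤ t ∧ t < (r : ℝ) + 1 then
      (1 - (t - (r : ℝ))) • A r.castSucc + (t - (r : ℝ)) • A r.succ
    else 0

def gset (a b : ℝ) (f : ℤ → ℤ) : Set (ℤ × ℤ) :=
  {p | a ≤ (p.1 : ℝ) ∧ (p.1 : ℝ) ≤ b ∧ p.2 = f p.1}

lemma gset_eq_coe (a b : ℝ) (f : ℤ → ℤ) :
    gset a b f = ↑((Finset.Icc ⌈a⌉ ⌊b⌋).image fun q => (q, f q)) := by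
  ext ⟨x, y⟩
  simp [gset, Int.ceil_le, Int.le_floor, and_assoc, eq_comm]

lemma gset_finite (a b : ℝ) (f : ℤ → ℤ) : (gset a b f).Finite := by
  rw [gset_eq_coe]; exact Finset.finite_toSet _

lemma gset_ncard {a b : ℝ} {f : ℤ → ℤ} :
    (gset a b f).ncard = ((Finset.Icc ⌈a⌉ ⌊b⌋)).card := by
  rw [gset_eq_coe, Set.ncard_coe_finset, Finset.card_image_of_injective]
  exact fun x y h => (Prod.mk.injEq _ _ _ _).mp h |>.1

lemma gset_ncard_le {a b L : ℝ} (f : ℤ → ℤ) (hL : 0 ≤ L) (h : b - a ≤ L) :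
    ((gset a b f).ncard : ℝ) ≤ L + 1 := by
  rw [gset_ncard]
  rcases le_or_gt ⌈a⌉ ⌊b⌋ with hc | hc
  · have h1 : (⌈a⌉ : ℝ) ≥ a := Int.le_ceil a
    have h2 : (⌊b⌋ : ℝ) ≤ b := Int.floor_le b
    have h3 : ((⌊b⌋ + 1 - ⌈a⌉).toNat : ℤ) = ⌊b⌋ + 1 - ⌈a⌉ := Int.toNat_of_nonneg (by omega)
    have h4 : (((⌊b⌋ + 1 - ⌈a⌉).toNat : ℕ) : ℝ) = (⌊b⌋:ℝ) + 1 - ⌈a⌉ := by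
      exact_mod_cast congrArg (Int.cast : ℤ → ℝ) h3
    rw [Int.card_Icc, h4]; linarith
  · rw [Int.card_Icc, Int.toNat_of_nonpos (by omega)]; simp; linarith

lemma gset_ncard_ge {a b : ℝ} (f : ℤ → ℤ) (h : a ≤ b) :
    b - a - 1 ≤ ((gset a b f).ncard : ℝ) := by
  rw [gset_ncard]
  rcases le_or_gt ⌈a⌉ ⌊b⌋ with hc | hc
  · have h1 : (⌈a⌉ : ℝ) < a + 1 := Int.ceil_lt_add_one a
    have h2 : (⌊b⌋ : ℝ) > b - 1 := Int.sub_one_lt_floor b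
    have h3 : ((⌊b⌋ + 1 - ⌈a⌉).toNat : ℤ) = ⌊b⌋ + 1 - ⌈a⌉ := Int.toNat_of_nonneg (by omega)
    have h4 : (((⌊b⌋ + 1 - ⌈a⌉).toNat : ℕ) : ℝ) = (⌊b⌋:ℝ) + 1 - ⌈a⌉ := by
      exact_mod_cast congrArg (Int.cast : ℤ → ℝ) h3
    rw [Int.card_Icc, h4]; linarith
  · have h2 : (⌊b⌋ : ℝ) > b - 1 := Int.sub_one_lt_floor b
    have h5 : ⌊b⌋ ≤ ⌈a⌉ - 1 := by omega
    have h6 : ((⌊b⌋:ℝ)) ≤ (⌈a⌉:ℝ) - 1 := by exact_mod_cast h5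
    have h7 : (⌈a⌉ : ℝ) < a + 1 := Int.ceil_lt_add_one a
    have : (0:ℝ) ≤ (Finset.Icc ⌈a⌉ ⌊b⌋).card := by positivity
    linarith

lemma gset_mono {a b a' b' : ℝ} (f : ℤ → ℤ) (ha : a' ≤ a) (hb : b ≤ b') :
    gset a b f ⊆ gset a' b' f := fun _ hp => ⟨le_trans ha hp.1, le_trans hp.2.1 hb, hp.2.2⟩


lemma abs_sub_lt_one_of_floor_eq {x y : ℝ} (h : ⌊x⌋ = ⌊y⌋) : |x - y| < 1 := by
  have h1 := Int.floor_le x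
  have h2 := Int.lt_floor_add_one x
  have h3 := Int.floor_le y
  have h4 := Int.lt_floor_add_one y
  rw [abs_lt]; constructor <;> · rw [h] at * ; linarith

lemma ncard_le_of_subset_gset {S : Set (ℤ×ℤ)} {a b L : ℝ} {f : ℤ → ℤ}
    (hsub : S ⊆ gset a b f) (hL : 0 ≤ L) (h : b - a ≤ L) : (S.ncard : ℝ) ≤ L + 1 := by
  calc (S.ncard : ℝ) ≤ ((gset a b f).ncard : ℝ) := by
        exact_mod_cast Set.ncard_le_ncard hsub (gset_finite a b f)
    _ ≤ L + 1 := gset_ncard_le f hL h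

lemma pair_same_axis (l₁ l₂ b₁ b₂ a₁ B₁ a₂ B₂ : ℝ)
    (hline : l₁ = l₂ ∧ b₁ = b₂ → B₁ ≤ a₂ ∨ B₂ ≤ a₁) :
    ∃ (C : ℝ) (N : ℕ), ∀ n : ℕ, N ≤ n →
      (((gset (n * a₁) (n * B₁) (fun q => ⌊l₁ * (q:ℝ) + n * b₁⌋) ∩
         gset (n * a₂) (n * B₂) (fun q => ⌊l₂ * (q:ℝ) + n * b₂⌋)).ncard : ℝ) ≤ C) := by
  by_cases hl : l₁ = l₂
  · by_cases hb : b₁ = b₂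
    · refine ⟨1, 0, fun n _ => ?_⟩
      rcases hline ⟨hl, hb⟩ with hB | hB
      · have hsub : (gset (n * a₁) (n * B₁) (fun q => ⌊l₁ * (q:ℝ) + n * b₁⌋) ∩
            gset (n * a₂) (n * B₂) (fun q => ⌊l₂ * (q:ℝ) + n * b₂⌋)) ⊆
            gset (n * a₂) (n * B₁) (fun q => ⌊l₁ * (q:ℝ) + n * b₁⌋) :=
          fun p hp => ⟨hp.2.1, hp.1.2.1, hp.1.2.2⟩
        have := ncard_le_of_subset_gset hsub le_rfl
          (by have h9 : (n:ℝ) * B₁ - n * a₂ = n * (B₁ - a₂) := by ring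
              rw [h9]; exact mul_nonpos_of_nonneg_of_nonpos (by positivity) (by linarith))
        simpa using this
      · have hsub : (gset (n * a₁) (n * B₁) (fun q => ⌊l₁ * (q:ℝ) + n * b₁⌋) ∩
            gset (n * a₂) (n * B₂) (fun q => ⌊l₂ * (q:ℝ) + n * b₂⌋)) ⊆
            gset (n * a₁) (n * B₂) (fun q => ⌊l₁ * (q:ℝ) + n * b₁⌋) :=
          fun p hp => ⟨hp.1.1, hp.2.2.1, hp.1.2.2⟩
        have := ncard_le_of_subset_gset hsub le_rfl
          (by have h9 : (n:ℝ) * B₂ - n * a₁ = n * (B₂ - a₁) := by ring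
              rw [h9]; exact mul_nonpos_of_nonneg_of_nonpos (by positivity) (by linarith))
        simpa using this
    · refine ⟨0, ⌈1 / |b₁ - b₂|⌉₊ + 1, fun n hn => ?_⟩
      have hinter : (gset (n * a₁) (n * B₁) (fun q => ⌊l₁ * (q:ℝ) + n * b₁⌋) ∩
         gset (n * a₂) (n * B₂) (fun q => ⌊l₂ * (q:ℝ) + n * b₂⌋)) = ∅ := by
        ext ⟨x, y⟩
        simp only [Set.mem_inter_iff, Set.mem_empty_iff_false, iff_false]
        rintro ⟨⟨-, -, h1⟩, ⟨-, -, h2⟩⟩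
        have habs := abs_sub_lt_one_of_floor_eq
          ((congrArg (fun z : ℤ × ℤ => z.2) rfl ▸ h1).symm.trans h2)
        rw [hl] at habs
        have heq : l₂ * (x:ℝ) + n * b₁ - (l₂ * x + n * b₂) = n * (b₁ - b₂) := by ring
        rw [heq, abs_mul, Nat.abs_cast] at habs
        have hbpos : 0 < |b₁ - b₂| := abs_pos.mpr (sub_ne_zero.mpr hb)
        have hnge : 1 / |b₁ - b₂| ≤ (n : ℝ) := by
          calc 1 / |b₁ - b₂| ≤ (⌈1 / |b₁ - b₂|⌉₊ : ℝ) := Nat.le_ceil _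
            _ ≤ n := by exact_mod_cast le_trans (Nat.le_succ _) hn
        rw [div_le_iff₀ hbpos] at hnge
        linarith
      rw [hinter]; simp
  · have hd : 0 < |l₁ - l₂| := abs_pos.mpr (sub_ne_zero.mpr hl)
    refine ⟨2 / |l₁ - l₂| + 1, 0, fun n _ => ?_⟩
    set c : ℝ := (n * (b₂ - b₁)) / (l₁ - l₂) with hc
    have hsub : (gset (n * a₁) (n * B₁) (fun q => ⌊l₁ * (q:ℝ) + n * b₁⌋) ∩
         gset (n * a₂) (n * B₂) (fun q => ⌊l₂ * (q:ℝ) + n * b₂⌋)) ⊆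
        gset (c - 1/|l₁ - l₂|) (c + 1/|l₁ - l₂|) (fun q => ⌊l₁ * (q:ℝ) + n * b₁⌋) := by
      rintro ⟨x, y⟩ ⟨⟨-, -, h1⟩, ⟨-, -, h2⟩⟩
      have habs := abs_sub_lt_one_of_floor_eq (h1.symm.trans h2)
      have hne : l₁ - l₂ ≠ 0 := sub_ne_zero.mpr hl
      have h9 : (l₁ - l₂) * c = n * (b₂ - b₁) := by rw [hc]; field_simp
      have heq : l₁ * (x:ℝ) + n * b₁ - (l₂ * x + n * b₂) = (l₁ - l₂) * (x - c) := by
        linear_combination h9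
      rw [heq, abs_mul] at habs
      have hx : |(x:ℝ) - c| < 1 / |l₁ - l₂| := by
        rw [lt_div_iff₀ hd]; nlinarith [abs_nonneg ((x:ℝ) - c)]
      rw [abs_lt] at hx
      exact ⟨by linarith [hx.1], by linarith [hx.2], h1⟩
    exact ncard_le_of_subset_gset hsub (by positivity) (le_of_eq (by ring))


lemma pair_mixed (l m b₁ b₂ a₁ B₁ a₂ B₂ : ℝ) (hl : |l| ≤ 1) (hm : |m| < 1) :
    ∃ C : ℝ, ∀ n : ℕ,
      (((gset (n * a₁) (n * B₁) (fun q => ⌊l * (q:ℝ) + n * b₁⌋) ∩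
         Prod.swap ⁻¹' gset (n * a₂) (n * B₂) (fun q => ⌊m * (q:ℝ) + n * b₂⌋)).ncard : ℝ)
        ≤ C) := by
  have hδ : 0 < 1 - |m| * |l| := by nlinarith [abs_nonneg m, abs_nonneg l]
  refine ⟨4 / (1 - |m| * |l|) + 1, fun n => ?_⟩
  set δ := 1 - m * l with hδdef
  have hδ' : 1 - |m| * |l| ≤ δ := by
    have : m * l ≤ |m * l| := le_abs_self _
    rw [abs_mul] at this; simp [hδdef]; linarith
  have hδpos : 0 < δ := lt_of_lt_of_le hδ hδ'
  set c : ℝ := (m * (n * b₁) + n * b₂) / δ with hc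
  have hsub : (gset (n * a₁) (n * B₁) (fun q => ⌊l * (q:ℝ) + n * b₁⌋) ∩
         Prod.swap ⁻¹' gset (n * a₂) (n * B₂) (fun q => ⌊m * (q:ℝ) + n * b₂⌋)) ⊆
      gset (c - 2/(1 - |m| * |l|)) (c + 2/(1 - |m| * |l|))
        (fun q => ⌊l * (q:ℝ) + n * b₁⌋) := by
    rintro ⟨x, y⟩ ⟨⟨hx1, hx2, h1⟩, ⟨-, -, h2⟩⟩
    simp only [Prod.fst_swap, Prod.snd_swap] at h2
    dsimp only at h1 hx1 hx2
    -- h1 : y = ⌊l x + n b₁⌋ ; h2 : x = ⌊m y + n b₂⌋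
    have e1a : ((y:ℤ):ℝ) ≤ l * x + n * b₁ := by rw [h1]; exact Int.floor_le _
    have e1b : l * x + n * b₁ < (y:ℝ) + 1 := by
      rw [h1]; push_cast; exact Int.lt_floor_add_one _
    have e2a : ((x:ℤ):ℝ) ≤ m * y + n * b₂ := by rw [h2]; exact Int.floor_le _
    have e2b : m * y + n * b₂ < (x:ℝ) + 1 := by
      rw [h2]; push_cast; exact Int.lt_floor_add_one _
    -- |x - (m l x + m n b₁ + n b₂)| ≤ 1 + |m|
    have key : |(x:ℝ) - (m * (l * x + n * b₁) + n * b₂)| ≤ 1 + |m| := by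
      have t1 : |(x:ℝ) - (m * y + n * b₂)| ≤ 1 := by rw [abs_le]; constructor <;> linarith
      have t2 : |m * (y:ℝ) - m * (l * x + n * b₁)| ≤ |m| := by
        rw [← mul_sub, abs_mul]
        have : |(y:ℝ) - (l * x + n * b₁)| ≤ 1 := by rw [abs_le]; constructor <;> linarith
        nlinarith [abs_nonneg m]
      calc |(x:ℝ) - (m * (l * x + n * b₁) + n * b₂)|
          = |((x:ℝ) - (m * y + n * b₂)) + (m * y - m * (l * x + n * b₁))| := by ring_nf
        _ ≤ _ := (abs_add_le _ _).trans (by linarith)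
    have key2 : |δ * ((x:ℝ) - c)| ≤ 1 + |m| := by
      have : δ * ((x:ℝ) - c) = (x:ℝ) - (m * (l * x + n * b₁) + n * b₂) := by
        rw [hc, mul_sub, mul_div_assoc', mul_div_cancel_left₀ _ hδpos.ne', hδdef]; ring
      rw [this]; exact key
    rw [abs_mul, abs_of_pos hδpos] at key2
    have hxc : |(x:ℝ) - c| ≤ 2 / (1 - |m| * |l|) := by
      rw [le_div_iff₀ hδ]
      nlinarith [abs_nonneg ((x:ℝ) - c)]
    rw [abs_le] at hxc
    exact ⟨by linarith [hxc.1], by linarith [hxc.2], h1⟩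
  exact ncard_le_of_subset_gset hsub (by positivity) (le_of_eq (by ring))


lemma smul_fst (n : ℝ) (u : ℝ × ℝ) : (n • u).1 = n * u.1 := rfl
lemma smul_snd (n : ℝ) (u : ℝ × ℝ) : (n • u).2 = n * u.2 := rfl

lemma segX_scaled (n : ℕ) (hn : 1 ≤ n) (u w : ℝ × ℝ) (h : |w.2 - u.2| ≤ |w.1 - u.1|) :
    segLatticeApprox ((n:ℝ) • u) ((n:ℝ) • w) =
      gset ((n:ℝ) * min u.1 w.1) ((n:ℝ) * max u.1 w.1)
        (fun q => ⌊(w.2 - u.2) / (w.1 - u.1) * (q:ℝ) +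
          (n:ℝ) * (u.2 - (w.2 - u.2) / (w.1 - u.1) * u.1)⌋) := by
  have hn0 : (0:ℝ) < n := by exact_mod_cast hn
  have hcond : |((n:ℝ) • w).2 - ((n:ℝ) • u).2| ≤ |((n:ℝ) • w).1 - ((n:ℝ) • u).1| := by
    simp only [smul_fst, smul_snd, ← mul_sub, abs_mul]
    exact mul_le_mul_of_nonneg_left h (abs_nonneg _)
  rw [segLatticeApprox, if_pos hcond]
  set s : ℝ := (w.2 - u.2) / (w.1 - u.1) with hs
  have e0 : ((n:ℝ) * w.2 - (n:ℝ) * u.2) / ((n:ℝ) * w.1 - (n:ℝ) * u.1) = s := by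
    rw [hs, ← mul_sub, ← mul_sub, mul_div_mul_left _ _ (ne_of_gt hn0)]
  have e1 : min ((n:ℝ) * u.1) ((n:ℝ) * w.1) = (n:ℝ) * min u.1 w.1 :=
    (mul_min_of_nonneg _ _ hn0.le).symm
  have e2 : max ((n:ℝ) * u.1) ((n:ℝ) * w.1) = (n:ℝ) * max u.1 w.1 :=
    (mul_max_of_nonneg _ _ hn0.le).symm
  have e3 : (n:ℝ) * u.2 - s * ((n:ℝ) * u.1) = (n:ℝ) * (u.2 - s * u.1) := by ring
  simp only [smul_fst, smul_snd, e0, e1, e2, e3]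
  rfl

lemma swap_preimage_eq_image (T : Set (ℤ × ℤ)) : Prod.swap ⁻¹' T = Prod.swap '' T :=
  congrFun (Set.image_eq_preimage_of_inverse Prod.swap_leftInverse Prod.swap_rightInverse).symm T

lemma segY_scaled (n : ℕ) (hn : 1 ≤ n) (u w : ℝ × ℝ) (h : ¬ (|w.2 - u.2| ≤ |w.1 - u.1|)) :
    segLatticeApprox ((n:ℝ) • u) ((n:ℝ) • w) =
      Prod.swap ⁻¹' gset ((n:ℝ) * min u.2 w.2) ((n:ℝ) * max u.2 w.2)
        (fun q => ⌊(w.1 - u.1) / (w.2 - u.2) * (q:ℝ) +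
          (n:ℝ) * (u.1 - (w.1 - u.1) / (w.2 - u.2) * u.2)⌋) := by
  have hn0 : (0:ℝ) < n := by exact_mod_cast hn
  have hcond : ¬ (|((n:ℝ) • w).2 - ((n:ℝ) • u).2| ≤ |((n:ℝ) • w).1 - ((n:ℝ) • u).1|) := by
    simp only [smul_fst, smul_snd, ← mul_sub, abs_mul]
    intro hcontra
    exact h (le_of_mul_le_mul_left hcontra (by rwa [abs_of_pos hn0]) )
  rw [segLatticeApprox, if_neg hcond]
  set s : ℝ := (w.1 - u.1) / (w.2 - u.2) with hs
  have e0 : ((n:ℝ) * w.1 - (n:ℝ) * u.1) / ((n:ℝ) * w.2 - (n:ℝ) * u.2) = s := by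
    rw [hs, ← mul_sub, ← mul_sub, mul_div_mul_left _ _ (ne_of_gt hn0)]
  have e1 : min ((n:ℝ) * u.2) ((n:ℝ) * w.2) = (n:ℝ) * min u.2 w.2 :=
    (mul_min_of_nonneg _ _ hn0.le).symm
  have e2 : max ((n:ℝ) * u.2) ((n:ℝ) * w.2) = (n:ℝ) * max u.2 w.2 :=
    (mul_max_of_nonneg _ _ hn0.le).symm
  have e3 : (n:ℝ) * u.1 - s * ((n:ℝ) * u.2) = (n:ℝ) * (u.1 - s * u.2) := by ring
  simp only [smul_fst, smul_snd, e0, e1, e2, e3]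
  rfl

lemma graph_point_mem_openSegment (u w : ℝ × ℝ) (hne : u.1 ≠ w.1) (l b : ℝ)
    (hu : u.2 = l * u.1 + b) (hw : w.2 = l * w.1 + b) (x₀ : ℝ)
    (h1 : min u.1 w.1 < x₀) (h2 : x₀ < max u.1 w.1) :
    (x₀, l * x₀ + b) ∈ openSegment ℝ u w := by
  rw [openSegment_eq_image]
  refine ⟨(x₀ - u.1) / (w.1 - u.1), ?_, ?_⟩
  · rcases lt_or_gt_of_ne hne with hlt | hlt
    · rw [min_eq_left hlt.le] at h1; rw [max_eq_right hlt.le] at h2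
      constructor
      · exact div_pos (by linarith) (by linarith)
      · rw [div_lt_one (by linarith)]; linarith
    · rw [min_eq_right hlt.le] at h1; rw [max_eq_left hlt.le] at h2
      constructor
      · exact div_pos_of_neg_of_neg (by linarith) (by linarith)
      · rw [div_lt_one_of_neg (by linarith)]; linarith
  · have hd : w.1 - u.1 ≠ 0 := sub_ne_zero.mpr (Ne.symm hne)
    have hx : (1 - (x₀ - u.1) / (w.1 - u.1)) * u.1 + (x₀ - u.1) / (w.1 - u.1) * w.1 = x₀ := by
      field_simp; ring
    dsimp only
    have : (1 - (x₀ - u.1) / (w.1 - u.1)) • u + ((x₀ - u.1) / (w.1 - u.1)) • w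
        = ((1 - (x₀ - u.1) / (w.1 - u.1)) * u.1 + (x₀ - u.1) / (w.1 - u.1) * w.1,
           (1 - (x₀ - u.1) / (w.1 - u.1)) * u.2 + (x₀ - u.1) / (w.1 - u.1) * w.2) := rfl
    rw [this, hx, hu, hw, Prod.mk.injEq]
    constructor
    · rfl
    · field_simp; ring


lemma graph_point_mem_openSegment_y (u w : ℝ × ℝ) (hne : u.2 ≠ w.2) (l b : ℝ)
    (hu : u.1 = l * u.2 + b) (hw : w.1 = l * w.2 + b) (y₀ : ℝ)
    (h1 : min u.2 w.2 < y₀) (h2 : y₀ < max u.2 w.2) :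
    (l * y₀ + b, y₀) ∈ openSegment ℝ u w := by
  rw [openSegment_eq_image]
  refine ⟨(y₀ - u.2) / (w.2 - u.2), ?_, ?_⟩
  · rcases lt_or_gt_of_ne hne with hlt | hlt
    · rw [min_eq_left hlt.le] at h1; rw [max_eq_right hlt.le] at h2
      constructor
      · exact div_pos (by linarith) (by linarith)
      · rw [div_lt_one (by linarith)]; linarith
    · rw [min_eq_right hlt.le] at h1; rw [max_eq_left hlt.le] at h2
      constructor
      · exact div_pos_of_neg_of_neg (by linarith) (by linarith)
      · rw [div_lt_one_of_neg (by linarith)]; linarith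
  · have hd : w.2 - u.2 ≠ 0 := sub_ne_zero.mpr (Ne.symm hne)
    dsimp only
    have hx : (1 - (y₀ - u.2) / (w.2 - u.2)) * u.2 + (y₀ - u.2) / (w.2 - u.2) * w.2 = y₀ := by
      field_simp; ring
    have : (1 - (y₀ - u.2) / (w.2 - u.2)) • u + ((y₀ - u.2) / (w.2 - u.2)) • w
        = ((1 - (y₀ - u.2) / (w.2 - u.2)) * u.1 + (y₀ - u.2) / (w.2 - u.2) * w.1,
           (1 - (y₀ - u.2) / (w.2 - u.2)) * u.2 + (y₀ - u.2) / (w.2 - u.2) * w.2) := rfl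
    rw [this, hx, hu, hw, Prod.mk.injEq]
    constructor
    · field_simp; ring
    · rfl

lemma ncard_swap_preimage (T : Set (ℤ × ℤ)) : (Prod.swap ⁻¹' T).ncard = T.ncard := by
  rw [swap_preimage_eq_image, Set.ncard_image_of_injective _ Prod.swap_injective]

lemma pair_seg (u₁ w₁ u₂ w₂ : ℝ × ℝ) (h₁ : u₁ ≠ w₁) (h₂ : u₂ ≠ w₂)
    (hdisj : openSegment ℝ u₁ w₁ ∩ openSegment ℝ u₂ w₂ = ∅) :
    ∃ (C : ℝ) (N : ℕ), ∀ n : ℕ, N ≤ n →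
      ((segLatticeApprox ((n:ℝ) • u₁) ((n:ℝ) • w₁) ∩
        segLatticeApprox ((n:ℝ) • u₂) ((n:ℝ) • w₂)).ncard : ℝ) ≤ C := by
  by_cases hc1 : |w₁.2 - u₁.2| ≤ |w₁.1 - u₁.1|
  · have hd1 : w₁.1 - u₁.1 ≠ 0 := by
      intro h0
      apply h₁
      have : w₁.2 - u₁.2 = 0 := by
        have := abs_nonneg (w₁.2 - u₁.2); rw [h0] at hc1; simp at hc1; linarith [abs_nonneg (w₁.2 - u₁.2), hc1]
      exact Prod.ext (by linarith [sub_eq_zero.mp h0]) (by linarith [sub_eq_zero.mp this]) |>.symm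
    have hl1 : |(w₁.2 - u₁.2) / (w₁.1 - u₁.1)| ≤ 1 := by
      rw [abs_div, div_le_one (abs_pos.mpr hd1)]; exact hc1
    by_cases hc2 : |w₂.2 - u₂.2| ≤ |w₂.1 - u₂.1|
    · -- XX case
      have hd2 : w₂.1 - u₂.1 ≠ 0 := by
        intro h0
        apply h₂
        have : w₂.2 - u₂.2 = 0 := by
          rw [h0] at hc2; simp at hc2; linarith [abs_nonneg (w₂.2 - u₂.2), hc2]
        exact Prod.ext (by linarith [sub_eq_zero.mp h0]) (by linarith [sub_eq_zero.mp this]) |>.symm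
      set l₁ : ℝ := (w₁.2 - u₁.2) / (w₁.1 - u₁.1) with hl₁def
      set l₂ : ℝ := (w₂.2 - u₂.2) / (w₂.1 - u₂.1) with hl₂def
      clear_value l₁ l₂
      have hline : l₁ = l₂ ∧ (u₁.2 - l₁ * u₁.1) = (u₂.2 - l₂ * u₂.1) →
          max u₁.1 w₁.1 ≤ min u₂.1 w₂.1 ∨ max u₂.1 w₂.1 ≤ min u₁.1 w₁.1 := by
        rintro ⟨hl, hb⟩
        by_contra hcon
        push_neg at hcon
        obtain ⟨hcon1, hcon2⟩ := hcon
        have hne1 : u₁.1 ≠ w₁.1 := fun h => hd1 (by rw [h]; ring)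
        have hne2 : u₂.1 ≠ w₂.1 := fun h => hd2 (by rw [h]; ring)
        have hmm1 : min u₁.1 w₁.1 < max u₁.1 w₁.1 := min_lt_max.mpr hne1
        have hmm2 : min u₂.1 w₂.1 < max u₂.1 w₂.1 := min_lt_max.mpr hne2
        set x₀ : ℝ := (max (min u₁.1 w₁.1) (min u₂.1 w₂.1)
          + min (max u₁.1 w₁.1) (max u₂.1 w₂.1)) / 2 with hx₀
        have hlt : max (min u₁.1 w₁.1) (min u₂.1 w₂.1)
            < min (max u₁.1 w₁.1) (max u₂.1 w₂.1) := by
          rw [max_lt_iff, lt_min_iff, lt_min_iff]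
          exact ⟨⟨hmm1, hcon2⟩, ⟨hcon1, hmm2⟩⟩
        have hx1 : min u₁.1 w₁.1 < x₀ ∧ x₀ < max u₁.1 w₁.1 := by
          constructor
          · calc min u₁.1 w₁.1 ≤ _ := le_max_left _ _
              _ < x₀ := by rw [hx₀]; linarith
          · calc x₀ < min (max u₁.1 w₁.1) (max u₂.1 w₂.1) := by rw [hx₀]; linarith
              _ ≤ _ := min_le_left _ _
        have hx2 : min u₂.1 w₂.1 < x₀ ∧ x₀ < max u₂.1 w₂.1 := by
          constructor
          · calc min u₂.1 w₂.1 ≤ _ := le_max_right _ _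
              _ < x₀ := by rw [hx₀]; linarith
          · calc x₀ < min (max u₁.1 w₁.1) (max u₂.1 w₂.1) := by rw [hx₀]; linarith
              _ ≤ _ := min_le_right _ _
        have hm1 : l₁ * (w₁.1 - u₁.1) = w₁.2 - u₁.2 := by
          rw [hl₁def]; exact div_mul_cancel₀ _ hd1
        have hm2' : l₂ * (w₂.1 - u₂.1) = w₂.2 - u₂.2 := by
          rw [hl₂def]; exact div_mul_cancel₀ _ hd2
        have honline1w : w₁.2 = l₁ * w₁.1 + (u₁.2 - l₁ * u₁.1) := by linear_combination (-1 : ℝ) * hm1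
        have hz1 : (x₀, l₁ * x₀ + (u₁.2 - l₁ * u₁.1)) ∈ openSegment ℝ u₁ w₁ :=
          graph_point_mem_openSegment u₁ w₁ hne1 l₁ _ (by ring) honline1w
            x₀ hx1.1 hx1.2
        have honline2u : u₂.2 = l₁ * u₂.1 + (u₁.2 - l₁ * u₁.1) := by
          linear_combination (-1 : ℝ) * hb - u₂.1 * hl
        have honline2w : w₂.2 = l₁ * w₂.1 + (u₁.2 - l₁ * u₁.1) := by
          linear_combination - hm2' - hb - w₂.1 * hl
        have hz2 : (x₀, l₁ * x₀ + (u₁.2 - l₁ * u₁.1)) ∈ openSegment ℝ u₂ w₂ :=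
          graph_point_mem_openSegment u₂ w₂ hne2 l₁ _ honline2u honline2w x₀ hx2.1 hx2.2
        have : (x₀, l₁ * x₀ + (u₁.2 - l₁ * u₁.1)) ∈ (openSegment ℝ u₁ w₁ ∩ openSegment ℝ u₂ w₂) := ⟨hz1, hz2⟩
        rw [hdisj] at this
        exact this
      obtain ⟨C, N, hC⟩ := pair_same_axis l₁ l₂ (u₁.2 - l₁ * u₁.1) (u₂.2 - l₂ * u₂.1)
        (min u₁.1 w₁.1) (max u₁.1 w₁.1) (min u₂.1 w₂.1) (max u₂.1 w₂.1) hline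
      refine ⟨C, max N 1, fun n hn => ?_⟩
      rw [segX_scaled n (le_trans (le_max_right _ _) hn) u₁ w₁ hc1,
          segX_scaled n (le_trans (le_max_right _ _) hn) u₂ w₂ hc2]
      rw [hl₁def, hl₂def] at hC
      exact hC n (le_trans (le_max_left _ _) hn)
    · -- XY case
      have hd2 : w₂.2 - u₂.2 ≠ 0 := by
        intro h0
        push_neg at hc2
        rw [h0] at hc2; simp at hc2; linarith [abs_nonneg (w₂.1 - u₂.1), hc2]
      have hm2 : |(w₂.1 - u₂.1) / (w₂.2 - u₂.2)| < 1 := by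
        push_neg at hc2
        rw [abs_div, div_lt_one (abs_pos.mpr hd2)]; exact hc2
      obtain ⟨C, hC⟩ := pair_mixed ((w₁.2 - u₁.2) / (w₁.1 - u₁.1))
        ((w₂.1 - u₂.1) / (w₂.2 - u₂.2))
        (u₁.2 - (w₁.2 - u₁.2) / (w₁.1 - u₁.1) * u₁.1)
        (u₂.1 - (w₂.1 - u₂.1) / (w₂.2 - u₂.2) * u₂.2)
        (min u₁.1 w₁.1) (max u₁.1 w₁.1) (min u₂.2 w₂.2) (max u₂.2 w₂.2) hl1 hm2
      refine ⟨C, 1, fun n hn => ?_⟩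
      rw [segX_scaled n hn u₁ w₁ hc1, segY_scaled n hn u₂ w₂ hc2]
      exact hC n
  · have hd1 : w₁.2 - u₁.2 ≠ 0 := by
      intro h0
      push_neg at hc1
      rw [h0] at hc1; simp at hc1; linarith [abs_nonneg (w₁.1 - u₁.1), hc1]
    have hm1 : |(w₁.1 - u₁.1) / (w₁.2 - u₁.2)| < 1 := by
      push_neg at hc1
      rw [abs_div, div_lt_one (abs_pos.mpr hd1)]; exact hc1
    by_cases hc2 : |w₂.2 - u₂.2| ≤ |w₂.1 - u₂.1|
    · -- YX case
      have hd2 : w₂.1 - u₂.1 ≠ 0 := by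
        intro h0
        apply h₂
        have : w₂.2 - u₂.2 = 0 := by
          rw [h0] at hc2; simp at hc2; linarith [abs_nonneg (w₂.2 - u₂.2), hc2]
        exact Prod.ext (by linarith [sub_eq_zero.mp h0]) (by linarith [sub_eq_zero.mp this]) |>.symm
      have hl2 : |(w₂.2 - u₂.2) / (w₂.1 - u₂.1)| ≤ 1 := by
        rw [abs_div, div_le_one (abs_pos.mpr hd2)]; exact hc2
      obtain ⟨C, hC⟩ := pair_mixed ((w₂.2 - u₂.2) / (w₂.1 - u₂.1))
        ((w₁.1 - u₁.1) / (w₁.2 - u₁.2))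
        (u₂.2 - (w₂.2 - u₂.2) / (w₂.1 - u₂.1) * u₂.1)
        (u₁.1 - (w₁.1 - u₁.1) / (w₁.2 - u₁.2) * u₁.2)
        (min u₂.1 w₂.1) (max u₂.1 w₂.1) (min u₁.2 w₁.2) (max u₁.2 w₁.2) hl2 hm1
      refine ⟨C, 1, fun n hn => ?_⟩
      rw [segY_scaled n hn u₁ w₁ hc1, segX_scaled n hn u₂ w₂ hc2, Set.inter_comm]
      exact hC n
    · -- YY case
      have hd2 : w₂.2 - u₂.2 ≠ 0 := by
        intro h0
        push_neg at hc2
        rw [h0] at hc2; simp at hc2; linarith [abs_nonneg (w₂.1 - u₂.1), hc2]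
      set l₁ : ℝ := (w₁.1 - u₁.1) / (w₁.2 - u₁.2) with hl₁def
      set l₂ : ℝ := (w₂.1 - u₂.1) / (w₂.2 - u₂.2) with hl₂def
      clear_value l₁ l₂
      have hline : l₁ = l₂ ∧ (u₁.1 - l₁ * u₁.2) = (u₂.1 - l₂ * u₂.2) →
          max u₁.2 w₁.2 ≤ min u₂.2 w₂.2 ∨ max u₂.2 w₂.2 ≤ min u₁.2 w₁.2 := by
        rintro ⟨hl, hb⟩
        by_contra hcon
        push_neg at hcon
        obtain ⟨hcon1, hcon2⟩ := hcon
        have hne1 : u₁.2 ≠ w₁.2 := fun h => hd1 (by rw [h]; ring)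
        have hne2 : u₂.2 ≠ w₂.2 := fun h => hd2 (by rw [h]; ring)
        have hmm1 : min u₁.2 w₁.2 < max u₁.2 w₁.2 := min_lt_max.mpr hne1
        have hmm2 : min u₂.2 w₂.2 < max u₂.2 w₂.2 := min_lt_max.mpr hne2
        set y₀ : ℝ := (max (min u₁.2 w₁.2) (min u₂.2 w₂.2)
          + min (max u₁.2 w₁.2) (max u₂.2 w₂.2)) / 2 with hy₀
        have hlt : max (min u₁.2 w₁.2) (min u₂.2 w₂.2)
            < min (max u₁.2 w₁.2) (max u₂.2 w₂.2) := by
          rw [max_lt_iff, lt_min_iff, lt_min_iff]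
          exact ⟨⟨hmm1, hcon2⟩, ⟨hcon1, hmm2⟩⟩
        have hx1 : min u₁.2 w₁.2 < y₀ ∧ y₀ < max u₁.2 w₁.2 := by
          constructor
          · calc min u₁.2 w₁.2 ≤ _ := le_max_left _ _
              _ < y₀ := by rw [hy₀]; linarith
          · calc y₀ < min (max u₁.2 w₁.2) (max u₂.2 w₂.2) := by rw [hy₀]; linarith
              _ ≤ _ := min_le_left _ _
        have hx2 : min u₂.2 w₂.2 < y₀ ∧ y₀ < max u₂.2 w₂.2 := by
          constructor
          · calc min u₂.2 w₂.2 ≤ _ := le_max_right _ _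
              _ < y₀ := by rw [hy₀]; linarith
          · calc y₀ < min (max u₁.2 w₁.2) (max u₂.2 w₂.2) := by rw [hy₀]; linarith
              _ ≤ _ := min_le_right _ _
        have hm1 : l₁ * (w₁.2 - u₁.2) = w₁.1 - u₁.1 := by
          rw [hl₁def]; exact div_mul_cancel₀ _ hd1
        have hm2' : l₂ * (w₂.2 - u₂.2) = w₂.1 - u₂.1 := by
          rw [hl₂def]; exact div_mul_cancel₀ _ hd2
        have honline1w : w₁.1 = l₁ * w₁.2 + (u₁.1 - l₁ * u₁.2) := by linear_combination (-1 : ℝ) * hm1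
        have hz1 : (l₁ * y₀ + (u₁.1 - l₁ * u₁.2), y₀) ∈ openSegment ℝ u₁ w₁ :=
          graph_point_mem_openSegment_y u₁ w₁ hne1 l₁ _ (by ring) honline1w
            y₀ hx1.1 hx1.2
        have honline2u : u₂.1 = l₁ * u₂.2 + (u₁.1 - l₁ * u₁.2) := by
          linear_combination (-1 : ℝ) * hb - u₂.2 * hl
        have honline2w : w₂.1 = l₁ * w₂.2 + (u₁.1 - l₁ * u₁.2) := by
          linear_combination - hm2' - hb - w₂.2 * hl
        have hz2 : (l₁ * y₀ + (u₁.1 - l₁ * u₁.2), y₀) ∈ openSegment ℝ u₂ w₂ :=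
          graph_point_mem_openSegment_y u₂ w₂ hne2 l₁ _ honline2u honline2w y₀ hx2.1 hx2.2
        have : (l₁ * y₀ + (u₁.1 - l₁ * u₁.2), y₀) ∈ (openSegment ℝ u₁ w₁ ∩ openSegment ℝ u₂ w₂) := ⟨hz1, hz2⟩
        rw [hdisj] at this
        exact this
      obtain ⟨C, N, hC⟩ := pair_same_axis l₁ l₂ (u₁.1 - l₁ * u₁.2) (u₂.1 - l₂ * u₂.2)
        (min u₁.2 w₁.2) (max u₁.2 w₁.2) (min u₂.2 w₂.2) (max u₂.2 w₂.2) hline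
      refine ⟨C, max N 1, fun n hn => ?_⟩
      rw [segY_scaled n (le_trans (le_max_right _ _) hn) u₁ w₁ hc1,
          segY_scaled n (le_trans (le_max_right _ _) hn) u₂ w₂ hc2,
          ← Set.preimage_inter]
      rw [hl₁def, hl₂def] at hC
      rw [ncard_swap_preimage]
      exact hC n (le_trans (le_max_left _ _) hn)


lemma Vbox_ncard (n : ℕ) : (Vbox n).ncard = (2 * n + 1) ^ 2 := by
  have : Vbox n = ↑(Finset.Icc (-(n:ℤ)) n ×ˢ Finset.Icc (-(n:ℤ)) n) := by
    ext ⟨x, y⟩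
    simp [Vbox, abs_le, Finset.mem_product]
    tauto
  rw [this, Set.ncard_coe_finset, Finset.card_product, Int.card_Icc]
  have h5 : ((n:ℤ) + 1 - -(n:ℤ)).toNat = 2 * n + 1 := by omega
  rw [h5]; ring

lemma boundary_ncard (n : ℕ) : (latticeBoundary (Vbox n)).ncard = 8 * n + 4 := by
  classical
  set m : ℤ := (n : ℤ) with hm
  have heq : latticeBoundary (Vbox n) =
      ↑((({-(m+1), m+1} : Finset ℤ) ×ˢ Finset.Icc (-m) m) ∪
        (Finset.Icc (-m) m ×ˢ ({-(m+1), m+1} : Finset ℤ))) := by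
    ext ⟨x, y⟩
    simp only [latticeBoundary, Vbox, Set.mem_setOf_eq, Finset.coe_union, Set.mem_union,
      Finset.coe_product, Set.mem_prod, Finset.mem_coe, Finset.mem_insert,
      Finset.mem_singleton, Finset.mem_Icc, abs_le, not_and, not_le]
    constructor
    · rintro ⟨hout, ⟨q1, q2⟩, ⟨hq1, hq2⟩, hsq⟩
      simp only at hsq hq1 hq2
      have ha1 : -1 ≤ x - q1 := by nlinarith [sq_nonneg (y - q2), sq_nonneg (x - q1 + 1)]
      have ha2 : x - q1 ≤ 1 := by nlinarith [sq_nonneg (y - q2), sq_nonneg (x - q1 - 1)]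
      have hb1 : -1 ≤ y - q2 := by nlinarith [sq_nonneg (x - q1), sq_nonneg (y - q2 + 1)]
      have hb2 : y - q2 ≤ 1 := by nlinarith [sq_nonneg (x - q1), sq_nonneg (y - q2 - 1)]
      have hcases : (x - q1 = 0 ∧ (y - q2 = 1 ∨ y - q2 = -1)) ∨
          (y - q2 = 0 ∧ (x - q1 = 1 ∨ x - q1 = -1)) := by
        rcases lt_trichotomy (x - q1) 0 with h | h | h
        · have hx1 : x - q1 = -1 := by omega
          have hy0 : (y - q2) ^ 2 = 0 := by rw [hx1] at hsq; nlinarith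
          right
          exact ⟨by nlinarith, Or.inr hx1⟩
        · left
          refine ⟨h, ?_⟩
          rcases lt_trichotomy (y - q2) 0 with h' | h' | h'
          · right; omega
          · rw [h, h'] at hsq; norm_num at hsq
          · left; omega
        · have hx1 : x - q1 = 1 := by omega
          have hy0 : (y - q2) ^ 2 = 0 := by rw [hx1] at hsq; nlinarith
          right
          exact ⟨by nlinarith, Or.inl hx1⟩
      omega
    · intro h
      have hx : (x = -(m+1) ∨ x = m+1) ∧ (-m ≤ y ∧ y ≤ m) ∨
          ((-m ≤ x ∧ x ≤ m) ∧ (y = -(m+1) ∨ y = m+1)) := h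
      constructor
      · intro h1 h2; omega
      · rcases hx with ⟨hx1 | hx1, hy⟩ | ⟨hx, hy1 | hy1⟩
        · refine ⟨(-m, y), ⟨?_, ?_⟩, ?_⟩
          · simp only [abs_le]; omega
          · simp only [abs_le]; omega
          · simp only; rw [hx1]; ring
        · refine ⟨(m, y), ⟨?_, ?_⟩, ?_⟩
          · simp only [abs_le]; omega
          · simp only [abs_le]; omega
          · simp only; rw [hx1]; ring
        · refine ⟨(x, -m), ⟨?_, ?_⟩, ?_⟩
          · simp only [abs_le]; omega
          · simp only [abs_le]; omega
          · simp only; rw [hy1]; ring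
        · refine ⟨(x, m), ⟨?_, ?_⟩, ?_⟩
          · simp only [abs_le]; omega
          · simp only [abs_le]; omega
          · simp only; rw [hy1]; ring
  rw [heq, Set.ncard_coe_finset]
  rw [Finset.card_union_of_disjoint]
  · rw [Finset.card_product, Finset.card_product, Int.card_Icc]
    have h2 : ({-(m+1), m+1} : Finset ℤ).card = 2 := by
      rw [Finset.card_insert_of_notMem (by simp; omega), Finset.card_singleton]
    have h3 : ((m:ℤ) + 1 - -m).toNat = 2 * n + 1 := by omega
    rw [h2, h3]; ring
  · rw [Finset.disjoint_left]
    rintro ⟨x, y⟩ hmem hmem2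
    simp only [Finset.mem_product, Finset.mem_insert, Finset.mem_singleton,
      Finset.mem_Icc] at hmem hmem2
    omega


lemma kval (alpha : ℝ) (hα : 0 < alpha) (n : ℕ) :
    ⌊Real.sqrt (alpha * (((2 * n + 1) ^ 2 : ℕ) : ℝ) / (4 * alpha))⌋.toNat = n := by
  have h1 : alpha * (((2 * n + 1) ^ 2 : ℕ) : ℝ) / (4 * alpha) = (((2*n+1 : ℕ):ℝ) / 2) ^ 2 := by
    push_cast
    field_simp
    ring
  rw [h1, Real.sqrt_sq (by positivity)]
  have h2 : ⌊((2*n+1 : ℕ):ℝ) / 2⌋ = (n : ℤ) := by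
    rw [Int.floor_eq_iff]
    constructor
    · push_cast; rw [le_div_iff₀ (by norm_num)]; linarith
    · push_cast; rw [div_lt_iff₀ (by norm_num)]; linarith
  rw [h2]; simp

lemma rhs_term_gen (d1 d2 : ℝ) (hne : ¬ (d1 = 0 ∧ d2 = 0)) :
    (1 / Real.sqrt (1 + (min |d2 / d1| |d1 / d2|) ^ 2)) * (Real.sqrt (d1 ^ 2 + d2 ^ 2) / 8)
      = max |d1| |d2| / 8 := by
  have hS : 0 < d1 ^ 2 + d2 ^ 2 := by
    rcases not_and_or.mp hne with h0 | h0 <;> positivity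
  have hsqS : 0 < Real.sqrt (d1 ^ 2 + d2 ^ 2) := Real.sqrt_pos.mpr hS
  rcases le_or_gt |d2| |d1| with hc | hc
  · have hd1ne : d1 ≠ 0 := by
      intro h0
      rw [h0] at hc; simp at hc
      exact hne ⟨h0, hc⟩
    have hd1pos : 0 < |d1| := abs_pos.mpr hd1ne
    have hmin : min |d2 / d1| |d1 / d2| = |d2| / |d1| := by
      rcases eq_or_ne d2 0 with h2 | h2
      · simp [h2]
      · rw [abs_div, abs_div]
        apply min_eq_left
        rw [div_le_div_iff₀ hd1pos (abs_pos.mpr h2)]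
        nlinarith [abs_pos.mpr h2]
    have e1 : 1 + (|d2| / |d1|) ^ 2 = (d1 ^ 2 + d2 ^ 2) / d1 ^ 2 := by
      rw [div_pow, sq_abs, sq_abs]
      field_simp
    rw [hmin, e1, Real.sqrt_div (by positivity) _, Real.sqrt_sq_eq_abs,
      max_eq_left hc]
    rw [one_div, inv_div]
    field_simp
  · have hd2ne : d2 ≠ 0 := by
      intro h0
      rw [h0] at hc; simp at hc
      linarith [abs_nonneg d1, hc]
    have hd2pos : 0 < |d2| := abs_pos.mpr hd2ne
    have hmin : min |d2 / d1| |d1 / d2| = |d1| / |d2| := by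
      rcases eq_or_ne d1 0 with h0 | h0
      · simp [h0]
      · rw [abs_div, abs_div]
        apply min_eq_right
        rw [div_le_div_iff₀ hd2pos (abs_pos.mpr h0)]
        nlinarith [abs_nonneg d1]
    have e1 : 1 + (|d1| / |d2|) ^ 2 = (d1 ^ 2 + d2 ^ 2) / d2 ^ 2 := by
      rw [div_pow, sq_abs, sq_abs]
      field_simp
      ring
    rw [hmin, e1, Real.sqrt_div (by positivity) _, Real.sqrt_sq_eq_abs,
      max_eq_right hc.le]
    rw [one_div, inv_div]
    field_simp


lemma polyMap_eval {R : ℕ} (A : Fin (R + 1) → ℝ × ℝ) (r : Fin R) (t : ℝ)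
    (h0 : 0 ≤ t) (h1 : t < 1) :
    polyMap A ((r : ℝ) + t) = (1 - t) • A r.castSucc + t • A r.succ := by
  rw [polyMap, Finset.sum_eq_single r]
  · rw [if_pos ⟨by linarith, by linarith⟩]
    simp only [add_sub_cancel_left]
  · intro r' _ hr'
    rw [if_neg]
    rintro ⟨ha, hb⟩
    rcases lt_or_gt_of_ne (fun h => hr' (Fin.ext h) : (r' : ℕ) ≠ (r : ℕ)) with hlt | hlt
    · have : ((r' : ℕ) : ℝ) + 1 ≤ ((r : ℕ) : ℝ) := by exact_mod_cast hlt
      linarith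
    · have : ((r : ℕ) : ℝ) + 1 ≤ ((r' : ℕ) : ℝ) := by exact_mod_cast hlt
      linarith
  · intro habs
    exact absurd (Finset.mem_univ r) habs

lemma openSegment_disjoint_of_inj {R : ℕ} (A : Fin (R + 1) → ℝ × ℝ)
    (hsimple : Set.InjOn (polyMap A) (Set.Ico (0 : ℝ) (R : ℝ)))
    (r s : Fin R) (hrs : r ≠ s) :
    openSegment ℝ (A r.castSucc) (A r.succ) ∩ openSegment ℝ (A s.castSucc) (A s.succ) = ∅ := by
  by_contra hcon
  obtain ⟨z, hz1, hz2⟩ := Set.nonempty_iff_ne_empty.mpr hcon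
  rw [openSegment_eq_image] at hz1 hz2
  obtain ⟨t, ⟨ht0, ht1⟩, hteq⟩ := hz1
  obtain ⟨t', ⟨ht0', ht1'⟩, hteq'⟩ := hz2
  have h1 : polyMap A ((r : ℝ) + t) = z := by rw [polyMap_eval A r t ht0.le ht1]; exact hteq
  have h2 : polyMap A ((s : ℝ) + t') = z := by rw [polyMap_eval A s t' ht0'.le ht1']; exact hteq'
  have hmem1 : (r : ℝ) + t ∈ Set.Ico (0 : ℝ) (R : ℝ) := by
    constructor
    · positivity
    · have : ((r : ℕ) : ℝ) + 1 ≤ R := by exact_mod_cast r.isLt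
      linarith
  have hmem2 : (s : ℝ) + t' ∈ Set.Ico (0 : ℝ) (R : ℝ) := by
    constructor
    · positivity
    · have : ((s : ℕ) : ℝ) + 1 ≤ R := by exact_mod_cast s.isLt
      linarith
  have := hsimple hmem1 hmem2 (h1.trans h2.symm)
  have hR : ((r : ℕ) : ℝ) = ((s : ℕ) : ℝ) + (t' - t) := by push_cast at this ⊢; linarith
  have : (r : ℕ) = (s : ℕ) := by
    have h3 : (((r : ℕ) : ℝ)) < ((s : ℕ) : ℝ) + 1 := by rw [hR]; linarith
    have h4 : (((s : ℕ) : ℝ)) < ((r : ℕ) : ℝ) + 1 := by rw [hR]; linarith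
    have h3' : (r : ℕ) < (s : ℕ) + 1 := by exact_mod_cast h3
    have h4' : (s : ℕ) < (r : ℕ) + 1 := by exact_mod_cast h4
    omega
  exact hrs (Fin.ext this)

lemma ncard_biUnion_le {X : Type*} {ι : Type*} [DecidableEq ι] (S : ι → Set X)
    (hfin : ∀ i, (S i).Finite) :
    ∀ t : Finset ι, (⋃ i ∈ t, S i).ncard ≤ ∑ i ∈ t, (S i).ncard := by
  intro t
  induction t using Finset.induction_on with
  | empty => simp
  | @insert a tt hnotmem ih =>
    rw [Finset.sum_insert hnotmem]
    refine le_trans (le_trans (Set.ncard_le_ncard (by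
      intro x hx
      simp only [Set.mem_iUnion, Set.mem_union] at hx ⊢
      obtain ⟨i, hi, hxi⟩ := hx
      rcases Finset.mem_insert.mp hi with h | h
      · exact Or.inl (h ▸ hxi)
      · exact Or.inr ⟨i, h, hxi⟩) (Set.Finite.union (hfin a) (Set.Finite.biUnion tt.finite_toSet (fun i _ => hfin i)))) (Set.ncard_union_le _ _)) ?_
    exact Nat.add_le_add_left ih _

lemma sum_ncard_le_ncard_biUnion_add {X : Type*} {ι : Type*} [DecidableEq ι] (S : ι → Set X)
    (hfin : ∀ i, (S i).Finite) :
    ∀ t : Finset ι, ∑ i ∈ t, (S i).ncard ≤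
      (⋃ i ∈ t, S i).ncard + ∑ p ∈ t.offDiag, (S p.1 ∩ S p.2).ncard := by
  intro t
  induction t using Finset.induction_on with
  | empty => simp
  | @insert a tt hnotmem ih =>
    have hfinU : (⋃ i ∈ tt, S i).Finite := Set.Finite.biUnion tt.finite_toSet (fun i _ => hfin i)
    rw [Finset.sum_insert hnotmem]
    have key : (S a).ncard + (⋃ i ∈ tt, S i).ncard
        ≤ (⋃ i ∈ insert a tt, S i).ncard + ∑ i ∈ tt, (S a ∩ S i).ncard := by
      have hU : (⋃ i ∈ insert a tt, S i) = S a ∪ ⋃ i ∈ tt, S i := by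
        simp [Set.biUnion_insert]
      rw [hU]
      have := Set.ncard_inter_add_ncard_union (S a) (⋃ i ∈ tt, S i) (hfin a) hfinU
      have hint : (S a ∩ ⋃ i ∈ tt, S i).ncard ≤ ∑ i ∈ tt, (S a ∩ S i).ncard := by
        have : S a ∩ ⋃ i ∈ tt, S i = ⋃ i ∈ tt, (S a ∩ S i) := by
          rw [Set.inter_iUnion₂]
        rw [this]
        exact ncard_biUnion_le _ (fun i => (hfin a).inter_of_left _) tt
      omega
    have hoff : tt.offDiag ∪ ({a} ×ˢ tt) ∪ (tt ×ˢ {a}) ⊆ (insert a tt).offDiag := by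
      rintro ⟨p1, p2⟩ hp
      simp only [Finset.mem_union, Finset.mem_offDiag, Finset.mem_product,
        Finset.mem_singleton, Finset.mem_insert] at hp ⊢
      rcases hp with (⟨h1, h2, h3⟩ | ⟨h1, h2⟩) | ⟨h1, h2⟩
      · exact ⟨Or.inr h1, Or.inr h2, h3⟩
      · exact ⟨Or.inl h1, Or.inr h2, fun he => hnotmem (by rw [← h1, he]; exact h2)⟩
      · exact ⟨Or.inr h1, Or.inl h2, fun he => hnotmem (by rw [← h2, ← he]; exact h1)⟩
    have hsum : ∑ p ∈ tt.offDiag, (S p.1 ∩ S p.2).ncard + ∑ i ∈ tt, (S a ∩ S i).ncard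
        ≤ ∑ p ∈ (insert a tt).offDiag, (S p.1 ∩ S p.2).ncard := by
      have e1 : ∑ i ∈ tt, (S a ∩ S i).ncard
          = ∑ p ∈ ({a} ×ˢ tt), (S p.1 ∩ S p.2).ncard := by
        rw [Finset.singleton_product, Finset.sum_map]
        rfl
      rw [e1, ← Finset.sum_union]
      · exact Finset.sum_le_sum_of_subset (Finset.Subset.trans Finset.subset_union_left hoff)
      · rw [Finset.disjoint_left]
        rintro ⟨p1, p2⟩ hp1 hp2
        simp only [Finset.mem_offDiag, Finset.mem_product, Finset.mem_singleton] at hp1 hp2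
        exact hnotmem (hp2.1 ▸ hp1.1)
    calc (S a).ncard + ∑ i ∈ tt, (S i).ncard
        ≤ (S a).ncard + ((⋃ i ∈ tt, S i).ncard + ∑ p ∈ tt.offDiag, (S p.1 ∩ S p.2).ncard) :=
          Nat.add_le_add_left ih _
      _ = ((S a).ncard + (⋃ i ∈ tt, S i).ncard) + ∑ p ∈ tt.offDiag, (S p.1 ∩ S p.2).ncard := by
          ring
      _ ≤ ((⋃ i ∈ insert a tt, S i).ncard + ∑ i ∈ tt, (S a ∩ S i).ncard)
            + ∑ p ∈ tt.offDiag, (S p.1 ∩ S p.2).ncard := Nat.add_le_add_right key _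
      _ = (⋃ i ∈ insert a tt, S i).ncard
            + (∑ p ∈ tt.offDiag, (S p.1 ∩ S p.2).ncard + ∑ i ∈ tt, (S a ∩ S i).ncard) := by ring
      _ ≤ _ := Nat.add_le_add_left hsum _

lemma lim_aux (a b : ℝ) :
    Filter.Tendsto (fun n : ℕ => ((n:ℝ) * a + b) / (8 * n + 4)) Filter.atTop
      (nhds (a / 8)) := by
  have h : ∀ᶠ n : ℕ in Filter.atTop,
      ((n:ℝ) * a + b) / (8 * n + 4) = (a + b * (1/n)) / (8 + 4 * (1/n)) := by
    filter_upwards [Filter.eventually_ge_atTop 1] with n hn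
    have hn0 : (n:ℝ) ≠ 0 := by positivity
    have h8 : (8:ℝ) * n + 4 ≠ 0 := by positivity
    field_simp
  rw [Filter.tendsto_congr' h]
  have h1 : Filter.Tendsto (fun n : ℕ => (1:ℝ)/n) Filter.atTop (nhds 0) :=
    tendsto_one_div_atTop_nhds_zero_nat
  have hnum : Filter.Tendsto (fun n : ℕ => a + b * (1/(n:ℝ))) Filter.atTop (nhds a) := by
    have := (h1.const_mul b).const_add a
    simpa using this
  have hden : Filter.Tendsto (fun n : ℕ => 8 + 4 * (1/(n:ℝ))) Filter.atTop (nhds 8) := by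
    have := (h1.const_mul 4).const_add (8:ℝ)
    simpa using this
  exact hnum.div hden (by norm_num)


lemma seg_finite_scaled (n : ℕ) (hn : 1 ≤ n) (u w : ℝ × ℝ) :
    (segLatticeApprox ((n:ℝ) • u) ((n:ℝ) • w)).Finite := by
  by_cases hc : |w.2 - u.2| ≤ |w.1 - u.1|
  · rw [segX_scaled n hn u w hc]; exact gset_finite _ _ _
  · rw [segY_scaled n hn u w hc, swap_preimage_eq_image]
    exact (gset_finite _ _ _).image _

lemma seg_count (n : ℕ) (hn : 1 ≤ n) (u w : ℝ × ℝ) (huw : u ≠ w) :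
    (n:ℝ) * max |w.1 - u.1| |w.2 - u.2| - 1
      ≤ ((segLatticeApprox ((n:ℝ) • u) ((n:ℝ) • w)).ncard : ℝ) ∧
    ((segLatticeApprox ((n:ℝ) • u) ((n:ℝ) • w)).ncard : ℝ)
      ≤ (n:ℝ) * max |w.1 - u.1| |w.2 - u.2| + 1 := by
  have hn0 : (0:ℝ) ≤ n := Nat.cast_nonneg n
  by_cases hc : |w.2 - u.2| ≤ |w.1 - u.1|
  · rw [segX_scaled n hn u w hc]
    have hminmax : (n:ℝ) * max u.1 w.1 - (n:ℝ) * min u.1 w.1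
        = (n:ℝ) * max |w.1 - u.1| |w.2 - u.2| := by
      rw [← mul_sub, max_sub_min_eq_abs, max_eq_left hc, abs_sub_comm]
    constructor
    · have := gset_ncard_ge (a := (n:ℝ) * min u.1 w.1) (b := (n:ℝ) * max u.1 w.1)
        (fun q => ⌊(w.2 - u.2) / (w.1 - u.1) * (q:ℝ) +
          (n:ℝ) * (u.2 - (w.2 - u.2) / (w.1 - u.1) * u.1)⌋)
        (by apply mul_le_mul_of_nonneg_left (min_le_max) hn0)
      linarith [this, hminmax.symm.le]
    · have := gset_ncard_le (a := (n:ℝ) * min u.1 w.1) (b := (n:ℝ) * max u.1 w.1)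
        (L := (n:ℝ) * max |w.1 - u.1| |w.2 - u.2|)
        (fun q => ⌊(w.2 - u.2) / (w.1 - u.1) * (q:ℝ) +
          (n:ℝ) * (u.2 - (w.2 - u.2) / (w.1 - u.1) * u.1)⌋)
        (by positivity) (le_of_eq hminmax)
      linarith
  · rw [segY_scaled n hn u w hc, ncard_swap_preimage]
    push_neg at hc
    have hminmax : (n:ℝ) * max u.2 w.2 - (n:ℝ) * min u.2 w.2
        = (n:ℝ) * max |w.1 - u.1| |w.2 - u.2| := by
      rw [← mul_sub, max_sub_min_eq_abs, max_eq_right hc.le, abs_sub_comm]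
    constructor
    · have := gset_ncard_ge (a := (n:ℝ) * min u.2 w.2) (b := (n:ℝ) * max u.2 w.2)
        (fun q => ⌊(w.1 - u.1) / (w.2 - u.2) * (q:ℝ) +
          (n:ℝ) * (u.1 - (w.1 - u.1) / (w.2 - u.2) * u.2)⌋)
        (by apply mul_le_mul_of_nonneg_left (min_le_max) hn0)
      linarith [this, hminmax.symm.le]
    · have := gset_ncard_le (a := (n:ℝ) * min u.2 w.2) (b := (n:ℝ) * max u.2 w.2)
        (L := (n:ℝ) * max |w.1 - u.1| |w.2 - u.2|)
        (fun q => ⌊(w.1 - u.1) / (w.2 - u.2) * (q:ℝ) +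
          (n:ℝ) * (u.1 - (w.1 - u.1) / (w.2 - u.2) * u.2)⌋)
        (by positivity) (le_of_eq hminmax)
      linarith


def Sseg {R : ℕ} (A : Fin (R + 1) → ℝ × ℝ) (n : ℕ) (r : Fin R) : Set (ℤ × ℤ) :=
  segLatticeApprox ((n:ℝ) • A r.castSucc) ((n:ℝ) • A r.succ)

noncomputable def cR {R : ℕ} (A : Fin (R + 1) → ℝ × ℝ) (r : Fin R) : ℝ :=
  max |(A r.succ).1 - (A r.castSucc).1| |(A r.succ).2 - (A r.castSucc).2|

theorem polygon_latticeApprox_card_div_boundary_card (alpha : ℝ)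
    (halpha : alpha ∈ Set.Ioc (0 : ℝ) 1) (R : ℕ) (hR : 0 < R)
    (A : Fin (R + 1) → ℝ × ℝ) (hclosed : A (Fin.last R) = A 0)
    (hedge : ∀ r : Fin R, A r.castSucc ≠ A r.succ)
    (hsimple : Set.InjOn (polyMap A) (Set.Ico (0 : ℝ) (R : ℝ)))
    (harea : polyArea A = 4 * alpha) :
    Filter.Tendsto
      (fun n : ℕ =>
        ((⋃ r : Fin R,
            segLatticeApprox
              (((⌊Real.sqrt (alpha * ((Vbox n).ncard : ℝ) / polyArea A)⌋.toNat : ℕ) : ℝ) •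
                A r.castSucc)
              (((⌊Real.sqrt (alpha * ((Vbox n).ncard : ℝ) / polyArea A)⌋.toNat : ℕ) : ℝ) •
                A r.succ)).ncard : ℝ) /
          ((latticeBoundary (Vbox n)).ncard : ℝ))
      Filter.atTop
      (nhds (∑ r : Fin R,
        (1 / Real.sqrt (1 + slopeOf (A r.succ - A r.castSucc) ^ 2)) *
          (elen (A r.castSucc) (A r.succ) / 8))) := by
  classical
  obtain ⟨hα0, _⟩ := halpha
  -- the limit value is ∑ cR / 8
  have hterm : ∀ r : Fin R,
      (1 / Real.sqrt (1 + slopeOf (A r.succ - A r.castSucc) ^ 2)) *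
        (elen (A r.castSucc) (A r.succ) / 8) = cR A r / 8 := by
    intro r
    have hne : ¬ ((A r.succ).1 - (A r.castSucc).1 = 0 ∧ (A r.succ).2 - (A r.castSucc).2 = 0) := by
      rintro ⟨h1, h2⟩
      exact hedge r (Prod.ext (by linarith) (by linarith)).symm
    have := rhs_term_gen ((A r.succ).1 - (A r.castSucc).1) ((A r.succ).2 - (A r.castSucc).2) hne
    simp only [slopeOf, elen, Prod.fst_sub, Prod.snd_sub, cR]
    exact this
  have hT : (∑ r : Fin R,
      (1 / Real.sqrt (1 + slopeOf (A r.succ - A r.castSucc) ^ 2)) *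
        (elen (A r.castSucc) (A r.succ) / 8)) = (∑ r : Fin R, cR A r) / 8 := by
    rw [Finset.sum_div]
    exact Finset.sum_congr rfl fun r _ => hterm r
  rw [hT]
  set Csum : ℝ := ∑ r : Fin R, cR A r with hCsum
  -- rewrite the function
  have hfeq : ∀ n : ℕ,
      ((⋃ r : Fin R,
            segLatticeApprox
              (((⌊Real.sqrt (alpha * ((Vbox n).ncard : ℝ) / polyArea A)⌋.toNat : ℕ) : ℝ) •
                A r.castSucc)
              (((⌊Real.sqrt (alpha * ((Vbox n).ncard : ℝ) / polyArea A)⌋.toNat : ℕ) : ℝ) •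
                A r.succ)).ncard : ℝ) /
          ((latticeBoundary (Vbox n)).ncard : ℝ)
        = ((⋃ r : Fin R, Sseg A n r).ncard : ℝ) / (8 * (n:ℝ) + 4) := by
    intro n
    have h1 : (⌊Real.sqrt (alpha * ((Vbox n).ncard : ℝ) / polyArea A)⌋.toNat) = n := by
      rw [Vbox_ncard n, harea]
      exact kval alpha hα0 n
    rw [boundary_ncard n, h1]
    have : ((8 * n + 4 : ℕ) : ℝ) = 8 * (n:ℝ) + 4 := by push_cast; ring
    rw [this]
    rfl
  -- pair bounds
  have hpair : ∀ p : Fin R × Fin R, ∃ (C : ℝ) (N : ℕ), p.1 ≠ p.2 → ∀ n : ℕ, N ≤ n →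
      ((Sseg A n p.1 ∩ Sseg A n p.2).ncard : ℝ) ≤ C := by
    intro p
    by_cases hne : p.1 ≠ p.2
    · obtain ⟨C, N, h⟩ := pair_seg (A p.1.castSucc) (A p.1.succ) (A p.2.castSucc) (A p.2.succ)
        (hedge p.1) (hedge p.2) (openSegment_disjoint_of_inj A hsimple p.1 p.2 hne)
      exact ⟨C, N, fun _ => h⟩
    · exact ⟨0, 0, fun h => absurd h hne⟩
  choose Cp Np hCp using hpair
  set K : ℝ := ∑ p ∈ (Finset.univ.offDiag : Finset (Fin R × Fin R)), Cp p with hK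
  set Nmax : ℕ := max ((Finset.univ.offDiag : Finset (Fin R × Fin R)).sup Np) 1 with hNmax
  refine Filter.Tendsto.congr (fun n => (hfeq n).symm) ?_
  refine tendsto_of_tendsto_of_tendsto_of_le_of_le' (lim_aux Csum (-(R + K))) (lim_aux Csum R)
    ?_ ?_
  · -- lower bound
    filter_upwards [Filter.eventually_ge_atTop Nmax] with n hn
    have hn1 : 1 ≤ n := le_trans (le_max_right _ _) hn
    have hden : (0:ℝ) < 8 * (n:ℝ) + 4 := by positivity
    have hfin : ∀ r : Fin R, (Sseg A n r).Finite := fun r => seg_finite_scaled n hn1 _ _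
    have haux := sum_ncard_le_ncard_biUnion_add (fun r => Sseg A n r) hfin Finset.univ
    have hUeq : (⋃ r ∈ (Finset.univ : Finset (Fin R)), Sseg A n r) = ⋃ r, Sseg A n r := by
      simp
    rw [hUeq] at haux
    have hauxR : (∑ r : Fin R, ((Sseg A n r).ncard : ℝ))
        ≤ ((⋃ r, Sseg A n r).ncard : ℝ)
          + ∑ p ∈ Finset.univ.offDiag, ((Sseg A n p.1 ∩ Sseg A n p.2).ncard : ℝ) := by
      exact_mod_cast haux
    have hKbound : ∑ p ∈ Finset.univ.offDiag, ((Sseg A n p.1 ∩ Sseg A n p.2).ncard : ℝ) ≤ K := by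
      rw [hK]
      refine Finset.sum_le_sum fun p hp => ?_
      have hne := (Finset.mem_offDiag.mp hp).2.2
      exact hCp p hne n (le_trans (le_trans (Finset.le_sup hp) (le_max_left _ _)) hn)
    have hsumlow : (n:ℝ) * Csum - R ≤ ∑ r : Fin R, ((Sseg A n r).ncard : ℝ) := by
      have h2 : ∑ r : Fin R, ((n:ℝ) * cR A r - 1) ≤ ∑ r : Fin R, ((Sseg A n r).ncard : ℝ) :=
        Finset.sum_le_sum fun r _ => (seg_count n hn1 _ _ (hedge r)).1
      have h3 : ∑ r : Fin R, ((n:ℝ) * cR A r - 1) = (n:ℝ) * Csum - R := by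
        rw [Finset.sum_sub_distrib, ← Finset.mul_sum, ← hCsum]
        simp [Finset.card_univ]
      linarith
    rw [div_le_div_iff_of_pos_right hden]
    linarith
  · -- upper bound
    filter_upwards [Filter.eventually_ge_atTop Nmax] with n hn
    have hn1 : 1 ≤ n := le_trans (le_max_right _ _) hn
    have hden : (0:ℝ) < 8 * (n:ℝ) + 4 := by positivity
    have hfin : ∀ r : Fin R, (Sseg A n r).Finite := fun r => seg_finite_scaled n hn1 _ _
    have haux := ncard_biUnion_le (fun r => Sseg A n r) hfin Finset.univ
    have hUeq : (⋃ r ∈ (Finset.univ : Finset (Fin R)), Sseg A n r) = ⋃ r, Sseg A n r := by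
      simp
    rw [hUeq] at haux
    have hauxR : ((⋃ r, Sseg A n r).ncard : ℝ) ≤ ∑ r : Fin R, ((Sseg A n r).ncard : ℝ) := by
      exact_mod_cast haux
    have hsumup : ∑ r : Fin R, ((Sseg A n r).ncard : ℝ) ≤ (n:ℝ) * Csum + R := by
      have h2 : ∑ r : Fin R, ((Sseg A n r).ncard : ℝ) ≤ ∑ r : Fin R, ((n:ℝ) * cR A r + 1) :=
        Finset.sum_le_sum fun r _ => (seg_count n hn1 _ _ (hedge r)).2
      have h3 : ∑ r : Fin R, ((n:ℝ) * cR A r + 1) = (n:ℝ) * Csum + R := by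
        rw [Finset.sum_add_distrib, ← Finset.mul_sum, ← hCsum]
        simp [Finset.card_univ]
      linarith
    rw [div_le_div_iff_of_pos_right hden]
    linarith
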